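/- Let A be a 2-dimensional F-vector space with basis {x, y} and anticommutative multiplication determined by [x, y] = y (the affine Lie algebra aff(F)). Then: (i) every linear map σ : A → A is a twisting map, i.e. satisfies the Hom-Jacobi identity (indeed the Hom-Jacobian is an alternating trilinear map, hence vanishes on a 2-dimensional space); and (ii) for every linear map σ with σ(y) ∉ F·y, the triple (A,[·,·],σ) is a simple Hom-Lie algebra, i.e. the only subspaces I of A with [I,A] ⊆ I and σ(I) ⊆ I are 0 and A. -/

import Mathlib

/-- Let `A` be 2-dimensional with basis `{x, y}` and anticommutative
multiplication determined by `[x, y] = y` (the affine Lie algebra `aff(F)`).  Then: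
(i) every linear map `σ : A → A` satisfies the Hom-Jacobi identity, and
(ii) for every linear `σ` with `σ(y) ∉ F·y`, the triple `(A,[·,·],σ)` is a simple
Hom-Lie algebra: its only Hom-ideals are `0` and `A`. -/
theorem stmt2 (F : Type*) [Field F] (A : Type*) [AddCommGroup A] [Module F A]
    (B : Module.Basis (Fin 2) F A)
    (b : A →ₗ[F] A →ₗ[F] A)
    (halt : ∀ x : A, b x x = 0)
    (haff : b (B 0) (B 1) = B 1) :
    (∀ σ : A →ₗ[F] A, ∀ x y z : A,
        b (σ x) (b y z) + b (σ y) (b z x) + b (σ z) (b x y) = 0) ∧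
    (∀ σ : A →ₗ[F] A, σ (B 1) ∉ Submodule.span F {B 1} →
      ∀ I : Submodule F A, (∀ v ∈ I, ∀ w : A, b v w ∈ I) → (∀ v ∈ I, σ v ∈ I) →
        I = ⊥ ∨ I = ⊤) := by
  have hskew : ∀ u v : A, b u v = - b v u := by
    intro u v
    have h := halt (u + v)
    simp only [map_add, LinearMap.add_apply, halt u, halt v, zero_add, add_zero] at h
    exact eq_neg_of_add_eq_zero_right h
  have hrep : ∀ u : A, u = B.repr u 0 • B 0 + B.repr u 1 • B 1 := by
    intro u
    have := B.sum_repr u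
    rw [Fin.sum_univ_two] at this
    exact this.symm
  have h10 : b (B 1) (B 0) = - B 1 := by rw [hskew, haff]
  have bform : ∀ u v : A,
      b u v = (B.repr u 0 * B.repr v 1 - B.repr u 1 * B.repr v 0) • B 1 := by
    intro u v
    conv_lhs => rw [hrep u, hrep v]
    simp only [map_add, map_smul, LinearMap.add_apply, LinearMap.smul_apply,
      halt, haff, h10, smul_zero, smul_neg]
    module
  have hr0 : ∀ s : F, B.repr (s • B 1) 0 = 0 := by
    intro s; simp [Finsupp.single_apply]
  have hr1 : ∀ s : F, B.repr (s • B 1) 1 = s := by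
    intro s; simp
  constructor
  · intro σ x y z
    have hσ : ∀ u : A, B.repr (σ u) 0
        = B.repr u 0 * B.repr (σ (B 0)) 0 + B.repr u 1 * B.repr (σ (B 1)) 0 := by
      intro u
      conv_lhs => rw [hrep u]
      simp [map_add, map_smul]
    rw [bform y z, bform z x, bform x y, bform (σ x), bform (σ y), bform (σ z),
      hr0, hr0, hr0, hr1, hr1, hr1]
    match_scalars
    rw [hσ x, hσ y, hσ z]
    ring
  · intro σ hσ I hbI hσI
    by_cases hI : I = ⊥
    · exact Or.inl hI
    right
    obtain ⟨v, hvI, hv⟩ := Submodule.exists_mem_ne_zero_of_ne_bot hI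
    have hrB1 : B.repr (B 1) 0 = 0 ∧ B.repr (B 1) 1 = 1 := by
      constructor <;> simp [Finsupp.single_apply]
    have h1 : B 1 ∈ I := by
      by_cases ha : B.repr v 0 = 0
      · have hd : B.repr v 1 ≠ 0 := by
          intro hd
          apply hv
          rw [hrep v, ha, hd, zero_smul, zero_smul, add_zero]
        obtain ⟨c, hcv, hc⟩ : ∃ c : F, v = c • B 1 ∧ c ≠ 0 := by
          refine ⟨B.repr v 1, ?_, hd⟩
          conv_lhs => rw [hrep v]
          rw [ha, zero_smul, zero_add]
        have hv1 : c⁻¹ • v = B 1 := by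
          rw [hcv, smul_smul, inv_mul_cancel₀ hc, one_smul]
        exact hv1 ▸ I.smul_mem _ hvI
      · have hbv : b v (B 1) ∈ I := hbI v hvI (B 1)
        rw [bform, hrB1.1, hrB1.2, mul_one, mul_zero, sub_zero] at hbv
        have hv1 : (B.repr v 0)⁻¹ • (B.repr v 0 • B 1) = B 1 := by
          rw [smul_smul, inv_mul_cancel₀ ha, one_smul]
        exact hv1 ▸ I.smul_mem _ hbv
    have hσ1 : σ (B 1) ∈ I := hσI _ h1
    have hp : B.repr (σ (B 1)) 0 ≠ 0 := by
      intro hp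
      apply hσ
      rw [Submodule.mem_span_singleton]
      refine ⟨B.repr (σ (B 1)) 1, ?_⟩
      conv_rhs => rw [hrep (σ (B 1))]
      rw [hp, zero_smul, zero_add]
    obtain ⟨p, d, hsp, hp0⟩ : ∃ p d : F, σ (B 1) = p • B 0 + d • B 1 ∧ p ≠ 0 := by
      refine ⟨B.repr (σ (B 1)) 0, B.repr (σ (B 1)) 1, ?_, hp⟩
      conv_lhs => rw [hrep (σ (B 1))]
    have h0 : B 0 ∈ I := by
      have hm : σ (B 1) - d • B 1 ∈ I := I.sub_mem hσ1 (I.smul_mem _ h1)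
      have he : p⁻¹ • (σ (B 1) - d • B 1) = B 0 := by
        rw [hsp, add_sub_cancel_right, smul_smul, inv_mul_cancel₀ hp0, one_smul]
      exact he ▸ I.smul_mem _ hm
    rw [eq_top_iff, ← B.span_eq]
    apply Submodule.span_le.mpr
    rintro _ ⟨i, rfl⟩
    fin_cases i
    · exact h0
    · exact h1
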